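/- Let M be a matroid over ground set [n] and let X_1, ..., X_n be nonnegative independent random variables. Let I_opt be a random independent set of M maximizing total weight Σ_{i∈I} X_i, and let p_i = P[i ∈ I_opt]. Then p = (p_1, ..., p_n) lies in the independent set polytope P_M, and E[max over independent sets I of Σ_{i∈I} X_i] ≤ Σ_i p_i · E[X_i | X_i ≥ F_i^{-1}(1 - p_i)], where F_i is the CDF of X_i (assuming each X_i has a continuous distribution). -/

import Mathlib

open MeasureTheory ProbabilityTheory in
lemma aux_shift {Ω : Type*} [MeasureSpace Ω] [IsProbabilityMeasure (ℙ : Measure Ω)]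
    (X : Ω → ℝ) (hm : Measurable X) (hi : Integrable X)
    (A : Set Ω) (hA : MeasurableSet A) (q : ℝ)
    (hq : ℙ {ω | q ≤ X ω} = ℙ A) :
    ∫ ω, A.indicator X ω ≤ ∫ ω, Set.indicator {ω | q ≤ X ω} X ω := by
  set B := {ω | q ≤ X ω} with hBdef
  have hBm : MeasurableSet B := measurableSet_le measurable_const hm
  rw [integral_indicator hA, integral_indicator hBm]
  have hsA : (∫ ω in A ∩ B, X ω) + ∫ ω in A \ B, X ω = ∫ ω in A, X ω :=
    integral_inter_add_diff hBm hi.integrableOn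
  have hsB : (∫ ω in B ∩ A, X ω) + ∫ ω in B \ A, X ω = ∫ ω in B, X ω :=
    integral_inter_add_diff hA hi.integrableOn
  rw [Set.inter_comm] at hsB
  rw [← hsA, ← hsB]
  gcongr _ + ?_
  have hmeq : ℙ (A \ B) = ℙ (B \ A) := by
    have h1 : ℙ (A ∩ B) + ℙ (A \ B) = ℙ A := measure_inter_add_diff A hBm
    have h2 : ℙ (A ∩ B) + ℙ (B \ A) = ℙ A := by
      rw [Set.inter_comm, measure_inter_add_diff B hA, hq]
    exact (ENNReal.add_right_inj (measure_ne_top _ _)).mp (h1.trans h2.symm)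
  calc ∫ ω in A \ B, X ω ≤ ∫ _ω in A \ B, q := by
        apply setIntegral_mono_on hi.integrableOn
          (integrableOn_const (measure_ne_top _ _)) (hA.diff hBm)
        intro x hx
        exact le_of_not_ge hx.2
    _ = q * (ℙ (A \ B)).toReal := by rw [setIntegral_const, smul_eq_mul, mul_comm, measureReal_def]
    _ = q * (ℙ (B \ A)).toReal := by rw [hmeq]
    _ = ∫ _ω in B \ A, q := by rw [setIntegral_const, smul_eq_mul, mul_comm, measureReal_def]
    _ ≤ ∫ ω in B \ A, X ω := by
        apply setIntegral_mono_on
          (integrableOn_const (measure_ne_top _ _)) hi.integrableOn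
          (hBm.diff hA)
        intro x hx
        exact hx.1

open MeasureTheory ProbabilityTheory in
theorem stmt_6 (n : ℕ) (M : Matroid (Fin n)) (hE : M.E = Set.univ)
    {Ω : Type*} [MeasureSpace Ω] [IsProbabilityMeasure (ℙ : Measure Ω)]
    (X : Fin n → Ω → ℝ) (hmeas : ∀ i, Measurable (X i))
    (hnn : ∀ i ω, 0 ≤ X i ω) (hint : ∀ i, Integrable (X i))
    (hindep : iIndepFun (m := fun _ => (inferInstance : MeasurableSpace ℝ)) X ℙ)
    (Iopt : Ω → Finset (Fin n))
    (hImeas : ∀ i, MeasurableSet {ω | i ∈ Iopt ω})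
    (hIind : ∀ ω, M.Indep ↑(Iopt ω))
    (hIopt : ∀ ω, ∀ I : Finset (Fin n), M.Indep ↑I →
      ∑ i ∈ I, X i ω ≤ ∑ i ∈ Iopt ω, X i ω)
    (p : Fin n → ℝ) (hp : ∀ i, p i = (ℙ {ω | i ∈ Iopt ω}).toReal)
    (q : Fin n → ℝ) (hq : ∀ i, ℙ {ω | q i ≤ X i ω} = ℙ {ω | i ∈ Iopt ω}) :
    p ∈ convexHull ℝ {x : Fin n → ℝ | ∃ I : Finset (Fin n), M.Indep ↑I ∧
        x = fun i => if i ∈ I then 1 else 0}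
    ∧ (∫ ω, ∑ i ∈ Iopt ω, X i ω) ≤
        ∑ i, ∫ ω, Set.indicator {ω' | q i ≤ X i ω'} (X i) ω := by
  classical
  -- measurability of the events {Iopt = I}
  have hmeasEq : ∀ I : Finset (Fin n), MeasurableSet {ω | Iopt ω = I} := by
    intro I
    have hset : {ω | Iopt ω = I}
        = ⋂ i, (if i ∈ I then {ω | i ∈ Iopt ω} else {ω | i ∈ Iopt ω}ᶜ) := by
      ext ω
      simp only [Set.mem_iInter, Set.mem_setOf_eq]
      constructor
      · rintro rfl i
        split <;> simpa [*]
      · intro h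
        ext i
        have := h i
        by_cases hi : i ∈ I <;> simp [hi] at this ⊢ <;> tauto
    rw [hset]
    exact MeasurableSet.iInter fun i => by
      split
      · exact hImeas i
      · exact (hImeas i).compl
  have hdisj : ∀ (s : Finset (Finset (Fin n))),
      (↑s : Set (Finset (Fin n))).PairwiseDisjoint (fun I => {ω | Iopt ω = I}) := by
    intro s I _ J _ hIJ
    refine Set.disjoint_left.2 fun ω h1 h2 => hIJ ?_
    simp only [Set.mem_setOf_eq] at h1 h2
    rw [← h1, ← h2]
  -- p i as a sum over independent sets
  have hpi : ∀ i : Fin n, ℙ {ω | i ∈ Iopt ω}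
      = ∑ I ∈ Finset.univ.filter (fun I : Finset (Fin n) => i ∈ I), ℙ {ω | Iopt ω = I} := by
    intro i
    rw [← measure_biUnion_finset (hdisj _) (fun I _ => hmeasEq I)]
    congr 1
    ext ω
    simp only [Set.mem_iUnion, Finset.mem_filter, Finset.mem_univ, true_and,
      Set.mem_setOf_eq]
    constructor
    · intro h; exact ⟨Iopt ω, h, rfl⟩
    · rintro ⟨I, hi, rfl⟩; exact hi
  -- weights
  set w : Finset (Fin n) → ℝ := fun I => (ℙ {ω | Iopt ω = I}).toReal with hw
  set t : Finset (Finset (Fin n)) := Finset.univ.filter (fun I => M.Indep ↑I) with ht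
  have hempty : ∀ I : Finset (Fin n), ¬ M.Indep ↑I → {ω | Iopt ω = I} = ∅ := by
    intro I hI
    ext ω
    simp only [Set.mem_setOf_eq, Set.mem_empty_iff_false, iff_false]
    intro h
    exact hI (h ▸ hIind ω)
  have hsum1 : ∑ I ∈ t, w I = 1 := by
    have h1 : ∑ I : Finset (Fin n), ℙ {ω | Iopt ω = I} = 1 := by
      rw [← measure_biUnion_finset (hdisj _) (fun I _ => hmeasEq I)]
      have : ⋃ I ∈ (Finset.univ : Finset (Finset (Fin n))), {ω | Iopt ω = I} = Set.univ := by
        ext ω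
        simp only [Set.mem_iUnion, Finset.mem_univ, Set.mem_setOf_eq, Set.mem_univ, iff_true]
        exact ⟨Iopt ω, trivial, rfl⟩
      rw [this, measure_univ]
    have h2 : ∑ I ∈ t, ℙ {ω | Iopt ω = I} = 1 := by
      rw [← h1]
      exact Finset.sum_subset (Finset.subset_univ _) fun I _ hIt => by
        rw [hempty I (by simpa [ht] using hIt), measure_empty]
    have := congrArg ENNReal.toReal h2
    rwa [ENNReal.toReal_sum (fun I _ => measure_ne_top _ _)] at this
  have hpw : ∀ i : Fin n, p i = ∑ I ∈ t, w I * (if i ∈ I then 1 else 0) := by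
    intro i
    rw [hp i, hpi i]
    rw [ENNReal.toReal_sum (fun I _ => measure_ne_top _ _)]
    have key : ∑ I ∈ t, w I * (if i ∈ I then 1 else 0)
        = ∑ I ∈ Finset.univ.filter (fun I : Finset (Fin n) => i ∈ I), w I := by
      have h0 : ∑ I ∈ t, w I * (if i ∈ I then 1 else 0)
          = ∑ I : Finset (Fin n), w I * (if i ∈ I then 1 else 0) := by
        refine Finset.sum_subset (Finset.subset_univ t) fun I _ hIt => ?_
        have hw0 : w I = 0 := by
          rw [hw]; simp [hempty I (by simpa [ht] using hIt)]
        simp [hw0]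
      rw [h0]
      simp only [mul_ite, mul_one, mul_zero]
      exact (Finset.sum_filter _ _).symm
    rw [key]
  constructor
  · -- convex hull part
    have hpc : p = t.centerMass w (fun I => fun i => if i ∈ I then (1:ℝ) else 0) := by
      rw [Finset.centerMass_eq_of_sum_1 _ _ hsum1]
      funext i
      rw [Finset.sum_apply]
      simp only [Pi.smul_apply, smul_eq_mul]
      exact hpw i
    rw [hpc]
    apply Finset.centerMass_mem_convexHull
    · intro I _; exact ENNReal.toReal_nonneg
    · rw [hsum1]; norm_num
    · intro I hI
      exact ⟨I, by simpa [ht] using hI, rfl⟩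
  · -- expectation inequality
    have hrw : ∀ ω, ∑ i ∈ Iopt ω, X i ω
        = ∑ i : Fin n, Set.indicator {ω' | i ∈ Iopt ω'} (X i) ω := by
      intro ω
      have : ∀ i : Fin n, Set.indicator {ω' | i ∈ Iopt ω'} (X i) ω
          = if i ∈ Iopt ω then X i ω else 0 := by
        intro i
        by_cases h : i ∈ Iopt ω <;> simp [Set.indicator_apply, h]
      simp only [this]
      rw [Finset.sum_ite_mem, Finset.univ_inter]
    calc ∫ ω, ∑ i ∈ Iopt ω, X i ω
        = ∫ ω, ∑ i : Fin n, Set.indicator {ω' | i ∈ Iopt ω'} (X i) ω := by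
          exact integral_congr_ae (Filter.Eventually.of_forall hrw)
      _ = ∑ i : Fin n, ∫ ω, Set.indicator {ω' | i ∈ Iopt ω'} (X i) ω :=
          integral_finset_sum _ fun i _ => (hint i).indicator (hImeas i)
      _ ≤ ∑ i, ∫ ω, Set.indicator {ω' | q i ≤ X i ω'} (X i) ω := by
          apply Finset.sum_le_sum
          intro i _
          exact aux_shift (X i) (hmeas i) (hint i) _ (hImeas i) (q i) (hq i)
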